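/- Let k be a field of characteristic p > 0 and let k ⊆ K be a (possibly infinite) separable algebraic field extension. Then the degree of imperfection is preserved: [K : K^p] = [k : k^p], where L^p denotes the subfield of p-th powers. In particular, if [k : k^p] ≤ p^s then [K : K^p] ≤ p^s. -/

import Mathlib

set_option maxHeartbeats 2000000
set_option synthInstance.maxHeartbeats 400000

open IntermediateField in
theorem stmt5aux
    (p : ℕ) [Fact p.Prime]
    (k K : Type) [Field k] [Field K] [Algebra k K]
    [CharP k p] [CharP K p]
    [Algebra.IsSeparable k K] [Algebra.IsAlgebraic k K] :
    Module.rank (↥((frobenius K p).fieldRange)) K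
      = Module.rank (↥((frobenius k p).fieldRange)) k := by
  classical
  haveI : ExpChar k p := .prime Fact.out
  haveI : ExpChar K p := .prime Fact.out
  set k' := (frobenius k p).fieldRange with hk'
  set K' := (frobenius K p).fieldRange with hK'
  let b := Module.Basis.ofVectorSpace ↥k' k
  let ι := Module.Basis.ofVectorSpaceIndex ↥k' k
  let w : ι → K := fun i => algebraMap k K (b i)
  have hmapK' : ∀ a : k, a ∈ k' → algebraMap k K a ∈ K' := by
    rintro _ ⟨z, rfl⟩
    exact ⟨algebraMap k K z, by rw [frobenius_def, frobenius_def, map_pow]⟩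
  set S := Submodule.span ↥K' (Set.range w) with hS
  have hk : ∀ c : k, algebraMap k K c ∈ S := by
    intro c
    rw [← b.linearCombination_repr c, Finsupp.linearCombination_apply, map_finsuppSum]
    refine Submodule.sum_mem _ fun i _ => ?_
    show algebraMap k K ((b.repr c) i • b i) ∈ S
    have : algebraMap k K ((b.repr c) i • b i)
        = (⟨algebraMap k K ↑((b.repr c) i), hmapK' _ ((b.repr c) i).2⟩ : ↥K') • w i := by
      rw [Algebra.smul_def, map_mul, Algebra.smul_def]
      rfl
    rw [this]
    exact Submodule.smul_mem _ _ (Submodule.subset_span ⟨i, rfl⟩)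
  have hmul : ∀ z₁ ∈ S, ∀ z₂ ∈ S, z₁ * z₂ ∈ S := by
    intro z₁ h₁ z₂ h₂
    have h3 : S * S ≤ S := by
      rw [hS, Submodule.span_mul_span]
      refine Submodule.span_le.2 ?_
      rintro _ ⟨_, ⟨i, rfl⟩, _, ⟨j, rfl⟩, rfl⟩
      show w i * w j ∈ S
      have : w i * w j = algebraMap k K (b i * b j) := by rw [map_mul]
      rw [this]; exact hk _
    exact h3 (Submodule.mul_mem_mul h₁ h₂)
  have hspan : S = ⊤ := by
    rw [eq_top_iff]
    rintro x -
    have hx : x ∈ Algebra.adjoin k ({x ^ p} : Set K) := by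
      have h1 : x ∈ IntermediateField.adjoin k ({x ^ p} : Set K) := by
        have h2 := IntermediateField.adjoin_eq_adjoin_pow_expChar_of_isSeparable' k K ({x} : Set K) (q := p)
        rw [Set.image_singleton] at h2
        have h4 : x ∈ IntermediateField.adjoin k ({x} : Set K) :=
          IntermediateField.subset_adjoin k ({x} : Set K) rfl
        rwa [h2] at h4
      have h3 := IntermediateField.adjoin_toSubalgebra_of_isAlgebraic (F := k)
        (S := ({x ^ p} : Set K)) (fun y _ => Algebra.IsAlgebraic.isAlgebraic y)
      rw [← h3]
      exact h1
    have hx2 : x ∈ Submodule.span k ((Submonoid.closure ({x ^ p} : Set K) : Submonoid K) : Set K) := by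
      rw [← Algebra.adjoin_eq_span]
      exact hx
    clear hx
    refine Submodule.span_induction (p := fun y _ => y ∈ S) ?_ ?_ ?_ ?_ hx2
    · intro y hy
      have hy' : y ∈ K' := by
        have : Submonoid.closure ({x ^ p} : Set K) ≤ K'.toSubmonoid := by
          rw [Submonoid.closure_le]
          rintro _ rfl
          exact ⟨x, frobenius_def ..⟩
        exact this hy
      have h5 := Submodule.smul_mem S (⟨y, hy'⟩ : ↥K') (hk 1)
      have h4 : (⟨y, hy'⟩ : ↥K') • (algebraMap k K 1) = y := by
        rw [map_one, Algebra.smul_def, mul_one]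
        rfl
      rwa [h4] at h5
    · exact Submodule.zero_mem S
    · exact fun _ _ _ _ hu hv => Submodule.add_mem S hu hv
    · intro c z _ hz
      rw [Algebra.smul_def]
      exact hmul _ (hk c) _ hz
  have hli : LinearIndependent ↥K' w := by
    rw [linearIndependent_iff']
    intro s g hsum i hi
    have hch : ∀ j : ι, ∃ z : K, z ^ p = ((g j : K)) := by
      intro j
      obtain ⟨z, hz⟩ := (g j).2
      exact ⟨z, by rw [← hz, frobenius_def]⟩
    choose d hd using hch
    set L := IntermediateField.adjoin k (d '' (↑s : Set ι)) with hL
    haveI : Finite ↥(d '' (↑s : Set ι)) := (s.finite_toSet.image d).to_subtype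
    haveI : FiniteDimensional k ↥L := IntermediateField.finiteDimensional_adjoin
      (fun x _ => Algebra.IsIntegral.isIntegral x)
    haveI : Algebra.IsSeparable k ↥L := Algebra.isSeparable_tower_bot_of_isSeparable k ↥L K
    haveI : CharP ↥L p := charP_of_injective_algebraMap (algebraMap k ↥L).injective p
    haveI : ExpChar ↥L p := .prime Fact.out
    let e := Module.Free.chooseBasis k ↥L
    have hdL : ∀ j ∈ s, d j ∈ L := fun j hj =>
      IntermediateField.subset_adjoin _ _ ⟨j, hj, rfl⟩
    set D : ι → ↥L := fun j => if h : j ∈ s then ⟨d j, hdL j h⟩ else 0 with hD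
    set a : ι → Module.Free.ChooseBasisIndex k ↥L → k := fun j t => e.repr (D j) t with ha
    have hDexp : ∀ j, (D j) ^ p = ∑ t, (a j t) ^ p • (e t) ^ p := by
      intro j
      conv_lhs => rw [← e.sum_repr (D j), ← frobenius_def]
      rw [map_sum]
      refine Finset.sum_congr rfl fun t _ => ?_
      rw [frobenius_def, smul_pow]
    have key : ∀ j ∈ s, g j • w j
        = ∑ t, (a j t) ^ p • (L.val ((e t) ^ p) * w j) := by
      intro j hj
      have h1 : (g j : K) = L.val ((D j) ^ p) := by
        rw [map_pow]
        have h2 : L.val (D j) = d j := by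
          rw [hD]
          simp only [dif_pos hj]
          rfl
        rw [h2, hd j]
      have h3 : g j • w j = (g j : K) * w j := rfl
      rw [h3, h1, hDexp, map_sum, Finset.sum_mul]
      refine Finset.sum_congr rfl fun t _ => ?_
      rw [map_smul L.val, smul_mul_assoc]
    rw [Finset.sum_congr rfl key, Finset.sum_comm] at hsum
    set c : Module.Free.ChooseBasisIndex k ↥L → k :=
      fun t => ∑ j ∈ s, (a j t) ^ p * b j with hc
    have hEq : ∀ t, ∑ j ∈ s, (a j t) ^ p • (L.val ((e t) ^ p) * w j)
        = L.val ((c t) • (e t) ^ p) := by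
      intro t
      have h4 : ∀ j ∈ s, (a j t) ^ p • (L.val ((e t) ^ p) * w j)
          = L.val ((e t) ^ p) * ((a j t) ^ p • w j) := fun j _ => (mul_smul_comm _ _ _).symm
      rw [Finset.sum_congr rfl h4, ← Finset.mul_sum]
      have h5 : ∑ j ∈ s, (a j t) ^ p • w j = algebraMap k K (c t) := by
        rw [hc, map_sum]
        refine Finset.sum_congr rfl fun j _ => ?_
        rw [map_mul, Algebra.smul_def]
      rw [h5, map_smul L.val, Algebra.smul_def]
      rw [IsScalarTower.algebraMap_apply k ↥L K]
      show _ = algebraMap (↥L) K _ * _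
      rw [mul_comm]
    rw [Finset.sum_congr rfl (fun t _ => hEq t), ← map_sum] at hsum
    have hsum0 : ∑ t, (c t) • (e t) ^ p = 0 := by
      apply (algebraMap ↥L K).injective
      rw [map_zero]
      exact hsum
    have hliE : LinearIndependent k (fun t => (e t) ^ p) := by
      have h6 := e.linearIndependent.map_pow_expChar_pow_of_isSeparable p 1
      simpa [pow_one] using h6
    have hct : ∀ t, c t = 0 := Fintype.linearIndependent_iff.1 hliE _ hsum0
    have hat : ∀ t, a i t = 0 := by
      intro t
      have h0 := hct t
      rw [hc] at h0
      have h7 : ∑ j ∈ s, (⟨(a j t) ^ p, ⟨a j t, rfl⟩⟩ : ↥k') • b j = 0 := by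
        rw [← h0]
        exact Finset.sum_congr rfl fun j _ => rfl
      have h8 := linearIndependent_iff'.1 b.linearIndependent s
        (fun j => (⟨(a j t) ^ p, ⟨a j t, rfl⟩⟩ : ↥k')) h7 i hi
      have h9 : (a i t) ^ p = 0 := congrArg Subtype.val h8
      exact pow_eq_zero_iff (Nat.Prime.ne_zero Fact.out) |>.1 h9
    have hDi0 : D i = 0 := by
      apply e.repr.injective
      rw [map_zero]
      exact Finsupp.ext hat
    have hdi0 : d i = 0 := by
      have := congrArg (Subtype.val) hDi0
      rw [hD] at this
      simp only [dif_pos hi] at this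
      exact this
    have hgi : (g i : K) = 0 := by
      rw [← hd i, hdi0, zero_pow (Nat.Prime.ne_zero Fact.out)]
    exact Subtype.ext hgi
  have hbasis : Module.Basis ι ↥K' K := Module.Basis.mk hli hspan.ge
  rw [← hbasis.mk_eq_rank'', ← b.mk_eq_rank'']


/-- Separable algebraic extensions preserve the degree of imperfection: if `k ⊆ K`
is a separable algebraic extension of fields of characteristic `p > 0`, then
`[K : K^p] = [k : k^p]`, where `L^p` is the subfield of `p`-th powers (the range of
the Frobenius). In particular, if `[k : k^p] ≤ p^s` then `[K : K^p] ≤ p^s`. -/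
theorem stmt5
    (p : ℕ) [Fact p.Prime]
    (k K : Type) [Field k] [Field K] [Algebra k K]
    [CharP k p] [CharP K p]
    [Algebra.IsSeparable k K] [Algebra.IsAlgebraic k K] :
    Module.rank (↥((frobenius K p).fieldRange)) K
      = Module.rank (↥((frobenius k p).fieldRange)) k ∧
    ∀ s : ℕ, Module.rank (↥((frobenius k p).fieldRange)) k ≤ (p : Cardinal) ^ s →
      Module.rank (↥((frobenius K p).fieldRange)) K ≤ (p : Cardinal) ^ s := by
  have h := stmt5aux p k K
  exact ⟨h, fun s hs => h ▸ hs⟩
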